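/- Let F be a Fractran program and 𝒜_F the associated Fractran-type canonical collection. For every positive integer n, the trajectory of n in the canonical system of 𝒜_F eventually enters the relevant interval: there exists i such that the i-th trajectory value n_i satisfies 0 ≤ n_i < b_i, where n_0 = n and n_{j+1} = f_j(n_j). -/

import Mathlib

/-- One Fractran iteration: on input `n ≥ 1`, multiply by the first fraction in the
program giving an integer; return `0` if there is no such fraction (the program halts)
or if `n = 0`. -/
def fractranStep (F : List ℚ) (n : ℕ) : ℕ :=
  if n = 0 then 0
  else
    match F.find? (fun q => ((n : ℚ) * q).den == 1) with
    | some q => ((n : ℚ) * q).num.toNat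
    | none => 0

/-- The Fractran program `F` halts on input `n`. -/
def FractranHalts (F : List ℚ) (n : ℕ) : Prop :=
  ∃ k : ℕ, (fractranStep F)^[k] n = 0

/-- The base `b = 1 + ⌈max_k F_k⌉` of the Fractran-type canonical collection `𝒜_F`. -/
def bBase (F : List ℚ) : ℤ := 1 + (F.map fun q => ⌈q⌉).foldr max 0

/-- The bases of `𝒜_F`: `b_i = b^(i+1)`. -/
def bF (F : List ℚ) (i : ℕ) : ℤ := bBase F ^ (i + 1)

/-- The digit maps of `𝒜_F` on `[0, b_i)`: `f_F` except at the exceptional value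
`b_i - 1`, which is sent to `1`. -/
def digitF (F : List ℚ) (i : ℕ) (r : ℤ) : ℤ :=
  if r = bF F i - 1 then 1 else (fractranStep F r.toNat : ℤ)

/-- The residue sets of `𝒜_F`: `T_i = {r - b_i · f_i(r) : 0 ≤ r < b_i}`. -/
def TFr (F : List ℚ) (i : ℕ) : Set ℤ :=
  (fun r => r - bF F i * digitF F i r) '' Set.Ico 0 (bF F i)

/-- The canonical system maps of `𝒜_F`: `f_i(n) = (n - t_i(n)) / b_i`, where
`t_i(n) = r - b_i · f_i(r)` with `r = n mod b_i ∈ [0, b_i)` is the unique element of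
`T_i` congruent to `n` modulo `b_i`. -/
def fFr (F : List ℚ) (i : ℕ) (n : ℤ) : ℤ :=
  (n - Int.emod n (bF F i)) / bF F i + digitF F i (Int.emod n (bF F i))

/-- The trajectory of `n` in the canonical system of `𝒜_F`:
`n_0 = n`, `n_{i+1} = f_i(n_i)`. -/
def trajFr (F : List ℚ) (n : ℤ) : ℕ → ℤ
  | 0 => n
  | i + 1 => fFr F i (trajFr F n i)

section Aux

lemma le_foldr_max (l : List ℤ) (a : ℤ) (h : a ∈ l) : a ≤ l.foldr max 0 := by
  induction l with
  | nil => simp at h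
  | cons x xs ih =>
    rcases List.mem_cons.mp h with h | h
    · simp only [List.foldr_cons, h]; exact le_max_left x (xs.foldr max 0)
    · exact le_trans (ih h) (le_max_right _ _)

lemma bBase_ge_two (F : List ℚ) (hne : F ≠ []) (hpos : ∀ q ∈ F, 0 < q) :
    2 ≤ bBase F := by
  obtain ⟨q, hq⟩ := List.exists_mem_of_ne_nil F hne
  have h1 : (1 : ℤ) ≤ ⌈q⌉ := Int.ceil_pos.mpr (hpos q hq)
  have h2 : ⌈q⌉ ≤ (F.map fun q => ⌈q⌉).foldr max 0 :=
    le_foldr_max _ _ (List.mem_map.mpr ⟨q, hq, rfl⟩)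
  have : (1 : ℤ) ≤ (F.map fun q => ⌈q⌉).foldr max 0 := le_trans h1 h2
  unfold bBase; omega

lemma rat_le_bBase (F : List ℚ) {q : ℚ} (hq : q ∈ F) :
    q ≤ ((bBase F - 1 : ℤ) : ℚ) := by
  have h2 : ⌈q⌉ ≤ (F.map fun q => ⌈q⌉).foldr max 0 :=
    le_foldr_max _ _ (List.mem_map.mpr ⟨q, hq, rfl⟩)
  have : (⌈q⌉ : ℚ) ≤ ((bBase F - 1 : ℤ) : ℚ) := by
    have : ⌈q⌉ ≤ bBase F - 1 := by unfold bBase at *; omega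
    exact_mod_cast this
  exact le_trans (Int.le_ceil q) this

lemma fractranStep_le (F : List ℚ) (hne : F ≠ []) (hpos : ∀ q ∈ F, 0 < q) (m : ℕ) :
    (fractranStep F m : ℤ) ≤ (m : ℤ) * (bBase F - 1) := by
  have hb := bBase_ge_two F hne hpos
  unfold fractranStep
  have hm : (0 : ℤ) ≤ (m : ℤ) := Int.natCast_nonneg m
  split
  · simp only [Nat.cast_zero]; nlinarith
  · rename_i hm0
    rcases hfind : F.find? (fun q => ((m : ℚ) * q).den == 1) with _ | q
    · simp only [Nat.cast_zero]; nlinarith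
    · have hqmem : q ∈ F := List.mem_of_find?_eq_some hfind
      have hden : ((m : ℚ) * q).den = 1 := by
        have := List.find?_some hfind
        simpa using this
      have hnum : ((((m : ℚ) * q).num : ℤ) : ℚ) = (m : ℚ) * q :=
        (Rat.den_eq_one_iff _).mp hden
      have hqle : q ≤ ((bBase F - 1 : ℤ) : ℚ) := rat_le_bBase F hqmem
      have hnn : 0 ≤ (m : ℚ) * q := by
        have := (hpos q hqmem).le
        positivity
      have hnumnn : 0 ≤ ((m : ℚ) * q).num := Rat.num_nonneg.mpr hnn
      have hkey : ((m : ℚ) * q).num ≤ (m : ℤ) * (bBase F - 1) := by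
        have : (((m : ℚ) * q).num : ℚ) ≤ (((m : ℤ) * (bBase F - 1) : ℤ) : ℚ) := by
          rw [hnum]
          push_cast at hqle ⊢
          exact mul_le_mul_of_nonneg_left hqle (by positivity)
        exact_mod_cast this
      simp only []
      rw [Int.toNat_of_nonneg hnumnn]
      exact hkey

lemma bF_ge_two (F : List ℚ) (hne : F ≠ []) (hpos : ∀ q ∈ F, 0 < q) (i : ℕ) :
    2 ≤ bF F i := by
  have hb := bBase_ge_two F hne hpos
  calc (2 : ℤ) ≤ bBase F := hb
    _ = bBase F ^ 1 := (pow_one _).symm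
    _ ≤ bBase F ^ (i + 1) := pow_le_pow_right₀ (by omega) (by omega)

lemma digitF_nonneg (F : List ℚ) (i : ℕ) (r : ℤ) : 0 ≤ digitF F i r := by
  unfold digitF; split
  · norm_num
  · positivity

lemma digitF_le (F : List ℚ) (hne : F ≠ []) (hpos : ∀ q ∈ F, 0 < q) (i : ℕ)
    {r : ℤ} (hr0 : 0 ≤ r) (hr1 : r < bF F i) :
    digitF F i r ≤ (bF F i - 1) * (bBase F - 1) := by
  have hb := bBase_ge_two F hne hpos
  have hbi := bF_ge_two F hne hpos i
  unfold digitF; split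
  · nlinarith
  · calc (fractranStep F r.toNat : ℤ) ≤ (r.toNat : ℤ) * (bBase F - 1) :=
        fractranStep_le F hne hpos r.toNat
      _ = r * (bBase F - 1) := by rw [Int.toNat_of_nonneg hr0]
      _ ≤ (bF F i - 1) * (bBase F - 1) := by nlinarith

lemma fFr_eq (F : List ℚ) (hne : F ≠ []) (hpos : ∀ q ∈ F, 0 < q) (i : ℕ) (m : ℤ) :
    fFr F i m = m / bF F i + digitF F i (m % bF F i) := by
  have hbi := bF_ge_two F hne hpos i
  unfold fFr
  have heq : Int.emod m (bF F i) = m % bF F i := rfl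
  rw [heq]
  congr 1
  have h : m - m % bF F i = bF F i * (m / bF F i) := by
    rw [Int.emod_def]; ring
  rw [h, Int.mul_ediv_cancel_left _ (by omega)]

end Aux

/-- In the canonical system of `𝒜_F`, the trajectory of every positive integer
eventually enters the relevant interval: `0 ≤ n_i < b_i` for some `i`. -/
theorem trajFr_eventually_enters_interval
    (F : List ℚ) (hne : F ≠ []) (hpos : ∀ q ∈ F, 0 < q)
    (n : ℤ) (hn : 0 < n) :
    ∃ i : ℕ, 0 ≤ trajFr F n i ∧ trajFr F n i < bF F i := by
  have hb := bBase_ge_two F hne hpos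
  have hbi : ∀ i, 2 ≤ bF F i := bF_ge_two F hne hpos
  have inv : ∀ i, 0 ≤ trajFr F n i ∧ trajFr F n i ≤ n + 2 * bF F i := by
    intro i
    induction i with
    | zero =>
      have h0 := hbi 0
      show 0 ≤ n ∧ n ≤ n + 2 * bF F 0
      omega
    | succ i ih =>
      obtain ⟨h0, h1⟩ := ih
      have hbip := hbi i
      set m := trajFr F n i with hm
      have hstep : trajFr F n (i + 1) = m / bF F i + digitF F i (m % bF F i) := by
        rw [show trajFr F n (i + 1) = fFr F i m from rfl]
        exact fFr_eq F hne hpos i m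
      have hr0 : 0 ≤ m % bF F i := Int.emod_nonneg m (by omega)
      have hr1 : m % bF F i < bF F i := Int.emod_lt_of_pos m (by omega)
      have hd0 := digitF_nonneg F i (m % bF F i)
      have hd1 := digitF_le F hne hpos i hr0 hr1
      have hq0 : 0 ≤ m / bF F i := Int.ediv_nonneg h0 (by omega)
      have hq1 : m / bF F i ≤ n + 2 := by
        have h2 : m / bF F i ≤ (n + 2 * bF F i) / bF F i :=
          Int.ediv_le_ediv (by omega) h1
        have h3 : (n + 2 * bF F i) / bF F i = n / bF F i + 2 :=
          Int.add_mul_ediv_right _ _ (show bF F i ≠ 0 by omega)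
        have h4 : n / bF F i ≤ n := Int.ediv_le_self _ hn.le
        have h5 : 0 ≤ n / bF F i := Int.ediv_nonneg hn.le (by omega)
        omega
      have hbsucc : bF F (i + 1) = bF F i * bBase F := by
        unfold bF; rw [pow_succ]
      constructor
      · rw [hstep]; omega
      · rw [hstep, hbsucc]; nlinarith
  obtain ⟨i, hlt⟩ : ∃ i, n < bF F i := by
    refine ⟨n.toNat, ?_⟩
    have h2 : n < 2 ^ (n.toNat + 1) := by
      have h2a : n.toNat < 2 ^ (n.toNat + 1) :=
        lt_of_lt_of_le (Nat.lt_two_pow_self (n := n.toNat))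
          (Nat.pow_le_pow_right (by norm_num) (by omega))
      have h2b : (n.toNat : ℤ) < ((2 : ℕ) ^ (n.toNat + 1) : ℕ) := by exact_mod_cast h2a
      rw [Int.toNat_of_nonneg hn.le] at h2b
      exact_mod_cast h2b
    have h3 : (2 : ℤ) ^ (n.toNat + 1) ≤ bBase F ^ (n.toNat + 1) :=
      pow_le_pow_left₀ (by norm_num) (by omega) _
    unfold bF
    omega
  refine ⟨i + 1, (inv (i + 1)).1, ?_⟩
  obtain ⟨h0, h1⟩ := inv i
  have hbip := hbi i
  set m := trajFr F n i with hm
  have hstep : trajFr F n (i + 1) = m / bF F i + digitF F i (m % bF F i) := by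
    rw [show trajFr F n (i + 1) = fFr F i m from rfl]
    exact fFr_eq F hne hpos i m
  have hr0 : 0 ≤ m % bF F i := Int.emod_nonneg m (by omega)
  have hr1 : m % bF F i < bF F i := Int.emod_lt_of_pos m (by omega)
  have hd1 := digitF_le F hne hpos i hr0 hr1
  have hq : m / bF F i < 3 := by
    rw [Int.ediv_lt_iff_lt_mul (by omega)]
    omega
  have hbsucc : bF F (i + 1) = bF F i * bBase F := by
    unfold bF; rw [pow_succ]
  rw [hstep, hbsucc]
  nlinarith
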